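/- Under the identification via the pairing ⟨a,b⟩ = Σ_{[ξ]} d_ξ Tr(a(ξ)b(ξ)), every continuous linear functional on the Fréchet space S(Ĝ) = ∩_{k∈ℤ}S^k(Ĝ) is represented by some a ∈ S^k(Ĝ) for some k ∈ ℤ; i.e., the topological dual S'(Ĝ) is isomorphic to ∪_{k∈ℤ} S^k(Ĝ). -/

import Mathlib

open scoped Matrix

variable {I : Type*}

/-- Membership in the weighted matrix-sequence space `S^d(Ĝ)`. -/
def memS (n : I → ℕ) (w : I → ℝ) (d : ℝ)
    (a : ∀ ξ : I, Matrix (Fin (n ξ)) (Fin (n ξ)) ℂ) : Prop :=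
  Summable fun ξ => (n ξ : ℝ) * w ξ ^ (2 * d) * (Matrix.trace ((a ξ)ᴴ * a ξ)).re

/-- The norm of `S^d(Ĝ)`. -/
noncomputable def nrmS (n : I → ℕ) (w : I → ℝ) (d : ℝ)
    (a : ∀ ξ : I, Matrix (Fin (n ξ)) (Fin (n ξ)) ℂ) : ℝ :=
  Real.sqrt (∑' ξ, (n ξ : ℝ) * w ξ ^ (2 * d) * (Matrix.trace ((a ξ)ᴴ * a ξ)).re)

/-- Membership in the Schwartz-type space `S(Ĝ) = ∩_{k∈ℤ} S^k(Ĝ)`. -/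
def memSchwartz (n : I → ℕ) (w : I → ℝ)
    (a : ∀ ξ : I, Matrix (Fin (n ξ)) (Fin (n ξ)) ℂ) : Prop :=
  ∀ k : ℤ, memS n w (k : ℝ) a

namespace Stmt8Aux
noncomputable def gS (n : I → ℕ) (w : I → ℝ) (d : ℝ)
    (a : ∀ ξ : I, Matrix (Fin (n ξ)) (Fin (n ξ)) ℂ) (ξ : I) : ℝ :=
  (n ξ : ℝ) * w ξ ^ (2 * d) * (Matrix.trace ((a ξ)ᴴ * a ξ)).re

lemma tr_re {m : ℕ} (A : Matrix (Fin m) (Fin m) ℂ) :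
    (Matrix.trace (Aᴴ * A)).re = ∑ j, ∑ i, Complex.normSq (A i j) := by
  simp only [Matrix.trace, Matrix.diag, Matrix.mul_apply, Matrix.conjTranspose_apply,
    Complex.re_sum]
  refine Finset.sum_congr rfl fun j _ => Finset.sum_congr rfl fun i _ => ?_
  rw [show star (A i j) = (starRingEnd ℂ) (A i j) from rfl, ← Complex.normSq_eq_conj_mul_self]
  simp

lemma tr_re_nonneg {m : ℕ} (A : Matrix (Fin m) (Fin m) ℂ) :
    0 ≤ (Matrix.trace (Aᴴ * A)).re := by
  rw [tr_re]
  exact Finset.sum_nonneg fun j _ => Finset.sum_nonneg fun i _ => Complex.normSq_nonneg _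

lemma gS_nonneg {n : I → ℕ} {w : I → ℝ} (hw : ∀ ξ, 1 ≤ w ξ) (d : ℝ)
    (a : ∀ ξ : I, Matrix (Fin (n ξ)) (Fin (n ξ)) ℂ) (ξ : I) : 0 ≤ gS n w d a ξ := by
  have h0 : (0:ℝ) ≤ w ξ := le_trans zero_le_one (hw ξ)
  exact mul_nonneg (mul_nonneg (Nat.cast_nonneg _) (Real.rpow_nonneg h0 _)) (tr_re_nonneg (a ξ))

lemma tr_re_smul {m : ℕ} (c : ℂ) (A : Matrix (Fin m) (Fin m) ℂ) :
    (Matrix.trace ((c • A)ᴴ * (c • A))).re = Complex.normSq c * (Matrix.trace (Aᴴ * A)).re := by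
  simp only [tr_re, Matrix.smul_apply, smul_eq_mul, Complex.normSq_mul, Finset.mul_sum]

lemma tr_re_conjT {m : ℕ} (A : Matrix (Fin m) (Fin m) ℂ) :
    (Matrix.trace ((Aᴴ)ᴴ * Aᴴ)).re = (Matrix.trace (Aᴴ * A)).re := by
  rw [tr_re, tr_re]
  simp only [Matrix.conjTranspose_apply, Complex.star_def, Complex.normSq_conj]
  rw [Finset.sum_comm]

lemma trace_mul_conjT {m : ℕ} (A : Matrix (Fin m) (Fin m) ℂ) :
    Matrix.trace (A * Aᴴ) = ((Matrix.trace (Aᴴ * A)).re : ℂ) := by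
  rw [Matrix.trace_mul_comm]
  have h : Matrix.trace (Aᴴ * A) = ∑ j, ∑ i, (Complex.normSq (A i j) : ℂ) := by
    simp only [Matrix.trace, Matrix.diag, Matrix.mul_apply, Matrix.conjTranspose_apply]
    refine Finset.sum_congr rfl fun j _ => Finset.sum_congr rfl fun i _ => ?_
    rw [show star (A i j) = (starRingEnd ℂ) (A i j) from rfl, ← Complex.normSq_eq_conj_mul_self]
  rw [h]
  simp [Complex.re_sum]

lemma normSq_add_le (x y : ℂ) :
    Complex.normSq (x + y) ≤ 2 * Complex.normSq x + 2 * Complex.normSq y := by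
  rw [← Complex.sq_norm, ← Complex.sq_norm, ← Complex.sq_norm]
  have h := norm_add_le x y
  have h2 := mul_self_le_mul_self (norm_nonneg (x + y)) h
  nlinarith [sq_nonneg (‖x‖ - ‖y‖)]

lemma tr_re_add_le {m : ℕ} (A B : Matrix (Fin m) (Fin m) ℂ) :
    (Matrix.trace ((A + B)ᴴ * (A + B))).re ≤
      2 * (Matrix.trace (Aᴴ * A)).re + 2 * (Matrix.trace (Bᴴ * B)).re := by
  rw [tr_re, tr_re, tr_re]
  have key : ∀ j i : Fin m, Complex.normSq ((A + B) i j) ≤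
      2 * Complex.normSq (A i j) + 2 * Complex.normSq (B i j) :=
    fun j i => by simpa using normSq_add_le (A i j) (B i j)
  calc ∑ j, ∑ i, Complex.normSq ((A + B) i j)
      ≤ ∑ j, ∑ i, (2 * Complex.normSq (A i j) + 2 * Complex.normSq (B i j)) :=
        Finset.sum_le_sum fun j _ => Finset.sum_le_sum fun i _ => key j i
    _ = 2 * ∑ j, ∑ i, Complex.normSq (A i j) + 2 * ∑ j, ∑ i, Complex.normSq (B i j) := by
        simp [Finset.sum_add_distrib, Finset.mul_sum]

lemma memS_iff {n : I → ℕ} {w : I → ℝ} {d : ℝ}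
    {a : ∀ ξ : I, Matrix (Fin (n ξ)) (Fin (n ξ)) ℂ} :
    memS n w d a ↔ Summable (gS n w d a) := Iff.rfl

lemma nrmS_eq {n : I → ℕ} {w : I → ℝ} {d : ℝ}
    {a : ∀ ξ : I, Matrix (Fin (n ξ)) (Fin (n ξ)) ℂ} :
    nrmS n w d a = Real.sqrt (∑' ξ, gS n w d a ξ) := rfl

lemma memS_add {n : I → ℕ} {w : I → ℝ} (hw : ∀ ξ, 1 ≤ w ξ) {d : ℝ}
    {a b : ∀ ξ : I, Matrix (Fin (n ξ)) (Fin (n ξ)) ℂ}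
    (ha : memS n w d a) (hb : memS n w d b) : memS n w d (a + b) := by
  rw [memS_iff] at ha hb ⊢
  refine Summable.of_nonneg_of_le (gS_nonneg hw d _) (fun ξ => ?_)
    ((ha.mul_left 2).add (hb.mul_left 2))
  have h0 : (0:ℝ) ≤ (n ξ : ℝ) * w ξ ^ (2 * d) := by
    have h1 : (0:ℝ) ≤ w ξ := le_trans zero_le_one (hw ξ)
    positivity
  have h1 : gS n w d (a + b) ξ ≤ (n ξ : ℝ) * w ξ ^ (2 * d) *
      (2 * (Matrix.trace ((a ξ)ᴴ * a ξ)).re + 2 * (Matrix.trace ((b ξ)ᴴ * b ξ)).re) := by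
    unfold gS
    rw [mul_assoc, mul_assoc]
    refine mul_le_mul_of_nonneg_left ?_ (Nat.cast_nonneg _)
    refine mul_le_mul_of_nonneg_left ?_ (Real.rpow_nonneg (le_trans zero_le_one (hw ξ)) _)
    simpa using tr_re_add_le (a ξ) (b ξ)
  refine h1.trans (le_of_eq ?_)
  unfold gS
  ring

lemma memS_smul {n : I → ℕ} {w : I → ℝ} {d : ℝ} (c : ℂ)
    {a : ∀ ξ : I, Matrix (Fin (n ξ)) (Fin (n ξ)) ℂ}
    (ha : memS n w d a) : memS n w d (c • a) := by
  rw [memS_iff] at ha ⊢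
  refine (ha.mul_left (Complex.normSq c)).congr fun ξ => ?_
  unfold gS
  rw [show (c • a) ξ = c • a ξ from rfl, tr_re_smul]
  ring

lemma memSchwartz_add {n : I → ℕ} {w : I → ℝ} (hw : ∀ ξ, 1 ≤ w ξ)
    {a b : ∀ ξ : I, Matrix (Fin (n ξ)) (Fin (n ξ)) ℂ}
    (ha : memSchwartz n w a) (hb : memSchwartz n w b) : memSchwartz n w (a + b) :=
  fun k => memS_add hw (ha k) (hb k)

lemma memSchwartz_smul {n : I → ℕ} {w : I → ℝ} (c : ℂ)
    {a : ∀ ξ : I, Matrix (Fin (n ξ)) (Fin (n ξ)) ℂ}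
    (ha : memSchwartz n w a) : memSchwartz n w (c • a) :=
  fun k => memS_smul c (ha k)

lemma memSchwartz_zero {n : I → ℕ} {w : I → ℝ} :
    memSchwartz n w (0 : ∀ ξ : I, Matrix (Fin (n ξ)) (Fin (n ξ)) ℂ) := by
  intro k
  rw [memS_iff]
  refine summable_zero.congr fun ξ => ?_
  simp [gS]

lemma memSchwartz_sum {n : I → ℕ} {w : I → ℝ} (hw : ∀ ξ, 1 ≤ w ξ) {α : Type*} (s : Finset α)
    (f : α → ∀ ξ : I, Matrix (Fin (n ξ)) (Fin (n ξ)) ℂ)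
    (hf : ∀ x ∈ s, memSchwartz n w (f x)) : memSchwartz n w (∑ x ∈ s, f x) := by
  classical
  induction s using Finset.induction_on with
  | empty => simpa using (memSchwartz_zero : memSchwartz n w 0)
  | insert _ _ hx ih =>
    rw [Finset.sum_insert hx]
    exact memSchwartz_add hw (hf _ (Finset.mem_insert_self _ _))
      (ih fun x hxs => hf x (Finset.mem_insert_of_mem hxs))

lemma memSchwartz_of_finset {n : I → ℕ} {w : I → ℝ} (F : Finset I)
    {a : ∀ ξ : I, Matrix (Fin (n ξ)) (Fin (n ξ)) ℂ}
    (h : ∀ ξ ∉ F, a ξ = 0) : memSchwartz n w a := by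
  intro k
  rw [memS_iff]
  refine summable_of_ne_finset_zero (s := F) fun ξ hξ => ?_
  simp [gS, h ξ hξ]

lemma L_map_sum {n : I → ℕ} {w : I → ℝ} (hw : ∀ ξ, 1 ≤ w ξ)
    {L : (∀ ξ : I, Matrix (Fin (n ξ)) (Fin (n ξ)) ℂ) → ℂ}
    (hadd : ∀ a b, memSchwartz n w a → memSchwartz n w b → L (a + b) = L a + L b)
    (hzero : L 0 = 0) {α : Type*} (s : Finset α)
    (f : α → ∀ ξ : I, Matrix (Fin (n ξ)) (Fin (n ξ)) ℂ)
    (hf : ∀ x ∈ s, memSchwartz n w (f x)) :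
    L (∑ x ∈ s, f x) = ∑ x ∈ s, L (f x) := by
  classical
  induction s using Finset.induction_on with
  | empty => simpa using hzero
  | @insert x s hx ih =>
    rw [Finset.sum_insert hx, Finset.sum_insert hx,
      hadd _ _ (hf _ (Finset.mem_insert_self _ _))
        (memSchwartz_sum hw s f fun y hy => hf y (Finset.mem_insert_of_mem hy)),
      ih fun y hy => hf y (Finset.mem_insert_of_mem hy)]

end Stmt8Aux

namespace Stmt8Aux
variable [DecidableEq I]

/-- Basis element. -/
def EB (n : I → ℕ) (ξ0 : I) (i j : Fin (n ξ0)) :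
    ∀ ξ : I, Matrix (Fin (n ξ)) (Fin (n ξ)) ℂ :=
  Pi.single ξ0 (Matrix.single i j 1)

lemma EB_schwartz (n : I → ℕ) (w : I → ℝ) (ξ0 : I) (i j : Fin (n ξ0)) :
    memSchwartz n w (EB n ξ0 i j) :=
  memSchwartz_of_finset {ξ0} fun ξ hξ =>
    Pi.single_eq_of_ne (by simpa using hξ) _

/-- Truncation to a finset. -/
def truncF (n : I → ℕ) (F : Finset I) (a : ∀ ξ : I, Matrix (Fin (n ξ)) (Fin (n ξ)) ℂ) :
    ∀ ξ : I, Matrix (Fin (n ξ)) (Fin (n ξ)) ℂ :=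
  fun ξ => if ξ ∈ F then a ξ else 0

lemma truncF_schwartz (n : I → ℕ) (w : I → ℝ) (F : Finset I)
    (a : ∀ ξ : I, Matrix (Fin (n ξ)) (Fin (n ξ)) ℂ) : memSchwartz n w (truncF n F a) :=
  memSchwartz_of_finset F fun ξ hξ => by simp [truncF, hξ]

lemma single_schwartz (n : I → ℕ) (w : I → ℝ) (ξ : I) (M : Matrix (Fin (n ξ)) (Fin (n ξ)) ℂ) :
    memSchwartz n w (Pi.single ξ M) :=
  memSchwartz_of_finset {ξ} fun ξ' hξ' => Pi.single_eq_of_ne (by simpa using hξ') _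

lemma single_decomp (n : I → ℕ) (ξ : I) (M : Matrix (Fin (n ξ)) (Fin (n ξ)) ℂ) :
    Pi.single ξ M = ∑ i, ∑ j, M i j • EB n ξ i j := by
  have hM : M = ∑ i, ∑ j, M i j • Matrix.single i j (1 : ℂ) := by
    conv_lhs => rw [Matrix.matrix_eq_sum_single M]
    refine Finset.sum_congr rfl fun i _ => Finset.sum_congr rfl fun j _ => ?_
    rw [Matrix.smul_single, smul_eq_mul, mul_one]
  calc Pi.single ξ M
      = Pi.single ξ (∑ i, ∑ j, M i j • Matrix.single i j (1 : ℂ)) := by rw [← hM]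
    _ = ∑ i, ∑ j, M i j • EB n ξ i j := by
        have h2 : ∀ N : Matrix (Fin (n ξ)) (Fin (n ξ)) ℂ, Pi.single ξ N =
            AddMonoidHom.single (fun ξ' => Matrix (Fin (n ξ')) (Fin (n ξ')) ℂ) ξ N :=
          fun _ => rfl
        rw [h2, map_sum]
        refine Finset.sum_congr rfl fun i _ => ?_
        rw [map_sum]
        refine Finset.sum_congr rfl fun j _ => ?_
        rw [← h2]
        exact Pi.single_smul ξ (M i j) _

lemma truncF_decomp (n : I → ℕ) (F : Finset I)
    (a : ∀ ξ : I, Matrix (Fin (n ξ)) (Fin (n ξ)) ℂ) :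
    truncF n F a = ∑ ξ ∈ F, Pi.single ξ (a ξ) := by
  funext ξ'
  rw [Finset.sum_apply, Finset.sum_pi_single]
  rfl

/-- The representing element. -/
noncomputable def bRep (n : I → ℕ)
    (L : (∀ ξ : I, Matrix (Fin (n ξ)) (Fin (n ξ)) ℂ) → ℂ) :
    ∀ ξ : I, Matrix (Fin (n ξ)) (Fin (n ξ)) ℂ :=
  fun ξ => Matrix.of fun jj ii => L (EB n ξ ii jj) / (n ξ : ℂ)

section Lvals
variable {n : I → ℕ} {w : I → ℝ} (hw : ∀ ξ, 1 ≤ w ξ)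
  {L : (∀ ξ : I, Matrix (Fin (n ξ)) (Fin (n ξ)) ℂ) → ℂ}
  (hadd : ∀ a b, memSchwartz n w a → memSchwartz n w b → L (a + b) = L a + L b)
  (hsmul : ∀ (c : ℂ) a, memSchwartz n w a → L (c • a) = c * L a)

include hw hadd hsmul

lemma L_zero : L 0 = 0 := by
  have h := hsmul 0 0 memSchwartz_zero
  simpa using h

lemma L_single (ξ : I) (M : Matrix (Fin (n ξ)) (Fin (n ξ)) ℂ) :
    L (Pi.single ξ M) = (n ξ : ℂ) * Matrix.trace (bRep n L ξ * M) := by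
  rw [single_decomp n ξ M]
  rw [L_map_sum hw hadd (L_zero hw hadd hsmul) Finset.univ (fun i => ∑ j, M i j • EB n ξ i j) (fun i _ => memSchwartz_sum hw _ _
    (fun j _ => memSchwartz_smul _ (EB_schwartz n w ξ i j)))]
  have h1 : ∀ i : Fin (n ξ), L (∑ j, M i j • EB n ξ i j) = ∑ j, M i j * L (EB n ξ i j) := by
    intro i
    rw [L_map_sum hw hadd (L_zero hw hadd hsmul) _ _
      (fun j _ => memSchwartz_smul _ (EB_schwartz n w ξ i j))]
    exact Finset.sum_congr rfl fun j _ => hsmul _ _ (EB_schwartz n w ξ i j)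
  simp only [h1]
  rcases Nat.eq_zero_or_pos (n ξ) with h0 | hpos
  · rw [Matrix.trace]
    haveI : IsEmpty (Fin (n ξ)) := by rw [h0]; exact Fin.isEmpty
    simp
  · have hne : (n ξ : ℂ) ≠ 0 := Nat.cast_ne_zero.mpr hpos.ne'
    rw [Matrix.trace]
    simp only [Matrix.diag, Matrix.mul_apply, Finset.mul_sum]
    rw [Finset.sum_comm]
    refine Finset.sum_congr rfl fun i _ => Finset.sum_congr rfl fun j _ => ?_
    simp only [bRep, Matrix.of_apply]
    field_simp

lemma L_truncF (F : Finset I) (a : ∀ ξ : I, Matrix (Fin (n ξ)) (Fin (n ξ)) ℂ) :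
    L (truncF n F a) = ∑ ξ ∈ F, (n ξ : ℂ) * Matrix.trace (bRep n L ξ * a ξ) := by
  rw [truncF_decomp n F a,
    L_map_sum hw hadd (L_zero hw hadd hsmul) _ _ (fun ξ _ => single_schwartz n w ξ (a ξ))]
  exact Finset.sum_congr rfl fun ξ _ => L_single hw hadd hsmul ξ (a ξ)

end Lvals
end Stmt8Aux

open Stmt8Aux Filter in
/-- every continuous linear functional on the Fréchet space
`S(Ĝ) = ∩_k S^k(Ĝ)` (continuity being expressed by a bound `|L a| ≤ C‖a‖_{S^k}` by
one of the defining norms) is represented, via the trace pairing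
`⟨a,b⟩ = Σ d_ξ Tr(a(ξ)b(ξ))`, by an element `b ∈ S^{k'}(Ĝ)` for some `k' ∈ ℤ`;
i.e. `S'(Ĝ) ≅ ∪_{k∈ℤ} S^k(Ĝ)`. -/
theorem stmt8 [Countable I] (n : I → ℕ) (w : I → ℝ) (hw : ∀ ξ, 1 ≤ w ξ)
    (L : (∀ ξ : I, Matrix (Fin (n ξ)) (Fin (n ξ)) ℂ) → ℂ)
    (hadd : ∀ a b, memSchwartz n w a → memSchwartz n w b → L (a + b) = L a + L b)
    (hsmul : ∀ (c : ℂ) a, memSchwartz n w a → L (c • a) = c * L a)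
    (hcont : ∃ (k : ℤ) (C : ℝ), ∀ a, memSchwartz n w a →
      ‖L a‖ ≤ C * nrmS n w (k : ℝ) a) :
    ∃ (k' : ℤ) (b : ∀ ξ : I, Matrix (Fin (n ξ)) (Fin (n ξ)) ℂ),
      memS n w (k' : ℝ) b ∧
      ∀ a, memSchwartz n w a →
        L a = ∑' ξ, (n ξ : ℂ) * Matrix.trace (b ξ * a ξ) := by
  classical
  obtain ⟨k, C₀, hC₀⟩ := hcont
  set C : ℝ := max C₀ 0 with hCdef
  have hC : 0 ≤ C := le_max_right _ _
  have hL : ∀ a, memSchwartz n w a → ‖L a‖ ≤ C * nrmS n w (k : ℝ) a := fun a ha =>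
    (hC₀ a ha).trans (mul_le_mul_of_nonneg_right (le_max_left _ _) (Real.sqrt_nonneg _))
  have hwpos : ∀ ξ, (0:ℝ) < w ξ := fun ξ => lt_of_lt_of_le one_pos (hw ξ)
  have hLtr : ∀ (F : Finset I) a, L (truncF n F a) =
      ∑ ξ ∈ F, (n ξ : ℂ) * Matrix.trace (bRep n L ξ * a ξ) :=
    fun F a => L_truncF hw hadd hsmul F a
  -- Part A : the representing element lies in `S^{-k}`
  have hbS : memS n w ((-k : ℤ) : ℝ) (bRep n L) := by
    rw [memS_iff]
    refine summable_of_sum_le (c := C ^ 2) (fun ξ => gS_nonneg hw _ _ ξ) (fun F => ?_)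
    set c : I → ℝ := fun ξ => w ξ ^ (2 * ((-k : ℤ) : ℝ)) with hcdef
    set aF : ∀ ξ : I, Matrix (Fin (n ξ)) (Fin (n ξ)) ℂ :=
      truncF n F (fun ξ => ((c ξ : ℂ)) • (bRep n L ξ)ᴴ) with haFdef
    have haF_schwartz : memSchwartz n w aF := truncF_schwartz n w _ _
    have htr : ∀ ξ : I, Matrix.trace (bRep n L ξ * (((c ξ : ℂ)) • (bRep n L ξ)ᴴ)) =
        ((c ξ * (Matrix.trace ((bRep n L ξ)ᴴ * bRep n L ξ)).re : ℝ) : ℂ) := by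
      intro ξ
      rw [Matrix.mul_smul, Matrix.trace_smul, trace_mul_conjT, smul_eq_mul]
      push_cast
      ring
    have hLaF : L aF = ((∑ ξ ∈ F, gS n w ((-k : ℤ) : ℝ) (bRep n L) ξ : ℝ) : ℂ) := by
      rw [haFdef, hLtr]
      push_cast
      refine Finset.sum_congr rfl fun ξ _ => ?_
      rw [htr ξ]
      simp only [gS, hcdef]
      push_cast
      ring
    have hsum_nonneg : 0 ≤ ∑ ξ ∈ F, gS n w ((-k : ℤ) : ℝ) (bRep n L) ξ :=
      Finset.sum_nonneg fun ξ _ => gS_nonneg hw _ _ ξ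
    have habs : ‖L aF‖ = ∑ ξ ∈ F, gS n w ((-k : ℤ) : ℝ) (bRep n L) ξ := by
      rw [hLaF, Complex.norm_real, Real.norm_of_nonneg hsum_nonneg]
    have hgaF : ∀ ξ : I, gS n w (k : ℝ) aF ξ =
        if ξ ∈ F then gS n w ((-k : ℤ) : ℝ) (bRep n L) ξ else 0 := by
      intro ξ
      by_cases h : ξ ∈ F
      · simp only [h, if_true]
        have haFξ : aF ξ = ((c ξ : ℂ)) • (bRep n L ξ)ᴴ := by
          rw [haFdef]; simp [truncF, h]
        simp only [gS]
        rw [haFξ, tr_re_smul, tr_re_conjT, Complex.normSq_ofReal]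
        have hexp : w ξ ^ (2 * (k : ℝ)) * (c ξ * c ξ) = w ξ ^ (2 * ((-k : ℤ) : ℝ)) := by
          rw [hcdef]
          simp only
          rw [← Real.rpow_add (hwpos ξ), ← Real.rpow_add (hwpos ξ)]
          congr 1
          push_cast
          ring
        calc (n ξ : ℝ) * w ξ ^ (2 * (k : ℝ)) *
              (c ξ * c ξ * (Matrix.trace ((bRep n L ξ)ᴴ * bRep n L ξ)).re)
            = (n ξ : ℝ) * (w ξ ^ (2 * (k : ℝ)) * (c ξ * c ξ)) *
              (Matrix.trace ((bRep n L ξ)ᴴ * bRep n L ξ)).re := by ring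
          _ = (n ξ : ℝ) * w ξ ^ (2 * ((-k : ℤ) : ℝ)) *
              (Matrix.trace ((bRep n L ξ)ᴴ * bRep n L ξ)).re := by rw [hexp]
      · simp only [h, if_false]
        have haFξ : aF ξ = 0 := by rw [haFdef]; simp [truncF, h]
        simp only [gS]
        rw [haFξ]
        simp
    have hnrm : nrmS n w (k : ℝ) aF =
        Real.sqrt (∑ ξ ∈ F, gS n w ((-k : ℤ) : ℝ) (bRep n L) ξ) := by
      rw [nrmS_eq]
      congr 1
      rw [tsum_eq_sum (s := F) (fun ξ hξ => by rw [hgaF ξ, if_neg hξ])]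
      exact Finset.sum_congr rfl fun ξ hξ => by rw [hgaF ξ, if_pos hξ]
    have hbound := hL aF haF_schwartz
    rw [habs, hnrm] at hbound
    set S := ∑ ξ ∈ F, gS n w ((-k : ℤ) : ℝ) (bRep n L) ξ
    have hsq : Real.sqrt S * Real.sqrt S = S := Real.mul_self_sqrt hsum_nonneg
    nlinarith [Real.sqrt_nonneg S, sq_nonneg (Real.sqrt S - C)]
  -- Part B : representation of `L`
  refine ⟨-k, bRep n L, hbS, fun a ha => ?_⟩
  have hrest_schwartz : ∀ F : Finset I,
      memSchwartz n w (fun ξ => if ξ ∈ F then 0 else a ξ) := by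
    intro F k'
    rw [memS_iff]
    refine Summable.of_nonneg_of_le (gS_nonneg hw _ _) (fun ξ => ?_) (ha k')
    by_cases h : ξ ∈ F
    · simp only [gS, h, if_true]
      simpa [gS] using gS_nonneg hw (k' : ℝ) a ξ
    · simp only [gS, h, if_false]
      exact le_refl _
  have hsplit : ∀ F : Finset I,
      L a = L (truncF n F a) + L (fun ξ => if ξ ∈ F then 0 else a ξ) := by
    intro F
    rw [← hadd _ _ (truncF_schwartz n w F a) (hrest_schwartz F)]
    congr 1
    funext ξ
    by_cases h : ξ ∈ F <;> simp [truncF, h]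
  -- tail of the series
  have hgrest : ∀ F : Finset I, ∀ ξ : I,
      gS n w (k : ℝ) (fun ξ' => if ξ' ∈ F then 0 else a ξ') ξ =
        if ξ ∈ F then 0 else gS n w (k : ℝ) a ξ := by
    intro F ξ
    by_cases h : ξ ∈ F <;> simp [gS, h]
  have htail_eq : ∀ F : Finset I,
      (∑' ξ, gS n w (k : ℝ) (fun ξ' => if ξ' ∈ F then 0 else a ξ') ξ) =
        ∑' ξ : {x // x ∉ F}, gS n w (k : ℝ) a (ξ : I) := by
    intro F
    rw [← tsum_subtype_eq_of_support_subset
      (s := {x : I | x ∉ F}) (f := gS n w (k : ℝ) (fun ξ' => if ξ' ∈ F then 0 else a ξ'))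
      (by
        intro ξ hξ
        simp only [Function.mem_support, ne_eq] at hξ
        by_contra hmem
        simp only [Set.mem_setOf_eq, not_not] at hmem
        exact hξ (by rw [hgrest F ξ, if_pos hmem]))]
    exact tsum_congr fun ξ => by rw [hgrest F ξ, if_neg ξ.2]
  have htail0 : Tendsto
      (fun F : Finset I => ∑' ξ : {x // x ∉ F}, gS n w (k : ℝ) a (ξ : I))
      atTop (nhds 0) := tendsto_tsum_compl_atTop_zero _
  have hdist : Tendsto (fun F : Finset I => ‖L (truncF n F a) - L a‖) atTop (nhds 0) := by
    have hbnd : ∀ F : Finset I, ‖L (truncF n F a) - L a‖ ≤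
        C * Real.sqrt (∑' ξ : {x // x ∉ F}, gS n w (k : ℝ) a (ξ : I)) := by
      intro F
      have h1 : L (truncF n F a) - L a = -(L (fun ξ => if ξ ∈ F then 0 else a ξ)) := by
        rw [hsplit F]; ring
      rw [h1, norm_neg]
      have h2 := hL _ (hrest_schwartz F)
      refine h2.trans (le_of_eq ?_)
      rw [nrmS_eq, htail_eq F]
    have hlim : Tendsto (fun F : Finset I =>
        C * Real.sqrt (∑' ξ : {x // x ∉ F}, gS n w (k : ℝ) a (ξ : I))) atTop (nhds 0) := by
      have := ((Real.continuous_sqrt.tendsto 0).comp htail0).const_mul C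
      simpa using this
    refine squeeze_zero (fun F => norm_nonneg _) hbnd hlim
  have hHasSum : HasSum (fun ξ => (n ξ : ℂ) * Matrix.trace (bRep n L ξ * a ξ)) (L a) := by
    rw [HasSum]
    have : (fun F : Finset I => ∑ ξ ∈ F, (n ξ : ℂ) * Matrix.trace (bRep n L ξ * a ξ)) =
        fun F : Finset I => L (truncF n F a) := by
      funext F; rw [hLtr]
    rw [this]
    rw [tendsto_iff_norm_sub_tendsto_zero]
    exact hdist
  exact hHasSum.tsum_eq.symm
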